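/- Let J, c ∈ ℂ satisfy cosh c = e^{J/2}, and set a = −J/2, b = −c, d = J/2. Then for all x₁, x₂ ∈ {0,1}, ∑_{h∈{0,1}} exp( a − ln 2 + b·(x₁+x₂)·(2h−1) + c·(2h−1) + d·(x₁+x₂) ) = e^{J·x₁·x₂}. -/

import Mathlib

open Complex

/-- With `cosh c = e^{J/2}`, the parameters `a = −J/2`, `b = −c`, `d = J/2` let a single
hidden neuron simulate the pairwise interaction `e^{J x₁ x₂}` between two binary neurons. -/
theorem pair_interaction_gadget (J c : ℂ) (hc : Complex.cosh c = Complex.exp (J / 2))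
    (a b d : ℂ) (ha : a = -J / 2) (hb : b = -c) (hd : d = J / 2) (x₁ x₂ : Fin 2) :
    ∑ h : Fin 2, Complex.exp
        (a - Real.log 2 + b * (((x₁ : ℕ) : ℂ) + ((x₂ : ℕ) : ℂ)) * (2 * ((h : ℕ) : ℂ) - 1)
          + c * (2 * ((h : ℕ) : ℂ) - 1) + d * (((x₁ : ℕ) : ℂ) + ((x₂ : ℕ) : ℂ)))
      = Complex.exp (J * ((x₁ : ℕ) : ℂ) * ((x₂ : ℕ) : ℂ)) := by
  subst ha hb hd
  have hcc : Complex.exp c + (Complex.exp c)⁻¹ = 2 * Complex.exp (J / 2) := by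
    rw [Complex.cosh, Complex.exp_neg] at hc
    linear_combination 2 * hc
  have h2 : Complex.exp ((Real.log 2 : ℝ) : ℂ) = 2 := by
    rw [← Complex.ofReal_exp, Real.exp_log (by norm_num)]; norm_num
  have hhalf : Complex.exp (J * (-1 / 2)) * Complex.exp (J / 2) = 1 := by
    rw [← Complex.exp_add]; ring_nf; exact Complex.exp_zero
  have hhalf2 : Complex.exp (J * (1 / 2)) = Complex.exp (J / 2) := by ring_nf
  have hJ : Complex.exp (J / 2) * Complex.exp (J / 2) = Complex.exp J := by
    rw [← Complex.exp_add]; ring_nf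
  fin_cases x₁ <;> fin_cases x₂ <;>
    simp only [Fin.sum_univ_two, Fin.isValue, Fin.val_zero, Fin.val_one,
      Nat.cast_zero, Nat.cast_one] <;> ring_nf
  · rw [show J * (-1 / 2) - ((Real.log 2 : ℝ) : ℂ) - c
        = J * (-1 / 2) + -((Real.log 2 : ℝ) : ℂ) + -c from by ring,
      show J * (-1 / 2) - ((Real.log 2 : ℝ) : ℂ) + c
        = J * (-1 / 2) + -((Real.log 2 : ℝ) : ℂ) + c from by ring]
    simp only [Complex.exp_add, Complex.exp_neg, Complex.exp_zero, h2]
    linear_combination (Complex.exp (J * (-1 / 2)) / 2) * hcc + hhalf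
  · rw [Complex.exp_neg, h2, Complex.exp_zero]; norm_num
  · rw [Complex.exp_neg, h2, Complex.exp_zero]; norm_num
  · rw [show J * (1 / 2) - ((Real.log 2 : ℝ) : ℂ) + c
        = J * (1 / 2) + -((Real.log 2 : ℝ) : ℂ) + c from by ring,
      show J * (1 / 2) - ((Real.log 2 : ℝ) : ℂ) - c
        = J * (1 / 2) + -((Real.log 2 : ℝ) : ℂ) + -c from by ring]
    simp only [Complex.exp_add, Complex.exp_neg, h2, hhalf2]
    linear_combination (Complex.exp (J / 2) / 2) * hcc + hJ
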